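/- Let 1 ≤ p ≤ ∞ and r > 0. The space (L^∞, L^p)_r(μ) = { f ∈ L^0(μ) : _r‖f‖_{∞,p} < ∞ }, equipped with the norm f ↦ _r‖f‖_{∞,p}, is a complex Banach space: _r‖·‖_{∞,p} is a norm on it and every Cauchy sequence in this norm converges in this norm to an element of the space. -/

import Mathlib

open MeasureTheory Set
open scoped ENNReal
open scoped NNReal Topology

/-- The weighted Lebesgue measure `dμ(x) = (2^{k+1} Γ(k+1))⁻¹ |x|^{2k+1} dx`. -/
noncomputable def dunklMeasure (k : ℝ) : Measure ℝ :=
  (volume : Measure ℝ).withDensity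
    (fun x => ENNReal.ofReal ((2 ^ (k + 1) * Real.Gamma (k + 1))⁻¹ * |x| ^ (2 * k + 1)))
/-- The "ball" `B(x,r)`: for `x ≠ 0`, `{y : max 0 (|x|-r) < |y| < |x|+r}`; `B(0,r) = (-r,r)`. -/
def dunklBall (x r : ℝ) : Set ℝ :=
  if x = 0 then Set.Ioo (-r) r
  else {y : ℝ | max 0 (|x| - r) < |y| ∧ |y| < |x| + r}
/-- `_r‖f‖_{∞,p}`, the `L^p(μ)`-norm in `y` of `‖f χ_{B(y,r)}‖_{L^∞(μ)}`. -/
noncomputable def rNorm (k : ℝ) (r : ℝ) (p : ℝ≥0∞) (f : ℝ → ℂ) : ℝ≥0∞ :=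
  if p = ⊤ then
    essSup (fun y => eLpNorm ((dunklBall y r).indicator f) ⊤ (dunklMeasure k)) (dunklMeasure k)
  else
    (∫⁻ y, (eLpNorm ((dunklBall y r).indicator f) ⊤ (dunklMeasure k)) ^ p.toReal
        ∂(dunklMeasure k)) ^ (1 / p.toReal)

section
open Filter

namespace Stmt14Aux

noncomputable def dw (k : ℝ) : ℝ → ℝ≥0∞ :=
  fun x => ENNReal.ofReal ((2 ^ (k + 1) * Real.Gamma (k + 1))⁻¹ * |x| ^ (2 * k + 1))

lemma dunklMeasure_def (k : ℝ) :
    dunklMeasure k = (volume : Measure ℝ).withDensity (dw k) := rfl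

variable {k r : ℝ}

lemma c_pos (hk : -1/2 < k) : 0 < (2 ^ (k + 1) * Real.Gamma (k + 1))⁻¹ := by
  have h1 : (0:ℝ) < 2 ^ (k+1) := Real.rpow_pos_of_pos two_pos _
  have h2 : 0 < Real.Gamma (k+1) := Real.Gamma_pos_of_pos (by linarith)
  positivity

lemma exp_pos (hk : -1/2 < k) : (0:ℝ) < 2 * k + 1 := by linarith

lemma dw_measurable (hk : -1/2 < k) : Measurable (dw k) := by
  apply ENNReal.measurable_ofReal.comp
  apply Measurable.const_mul
  exact (Real.continuous_rpow_const (by linarith)).measurable.comp measurable_abs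

instance (k : ℝ) : SigmaFinite (dunklMeasure k) := by
  unfold dunklMeasure; infer_instance

lemma meas_zero_singleton : dunklMeasure k {0} = 0 :=
  (withDensity_absolutelyContinuous volume (dw k)) (by simp)

lemma ae_ne_zero : ∀ᵐ x ∂(dunklMeasure k), x ≠ 0 := by
  rw [ae_iff]
  convert meas_zero_singleton (k := k) using 2
  ext x; simp

lemma measurableSet_ball (x r : ℝ) : MeasurableSet (dunklBall x r) := by
  unfold dunklBall
  split_ifs with h
  · exact measurableSet_Ioo
  · exact measurable_abs measurableSet_Ioo

lemma prodBall_meas : MeasurableSet {q : ℝ × ℝ | q.2 ∈ dunklBall q.1 r} := by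
  have heq : {q : ℝ × ℝ | q.2 ∈ dunklBall q.1 r} =
      ({q : ℝ × ℝ | q.1 = 0} ∩ ({q : ℝ × ℝ | -r < q.2} ∩ {q : ℝ × ℝ | q.2 < r})) ∪
      ({q : ℝ × ℝ | q.1 = 0}ᶜ ∩ ({q : ℝ × ℝ | max 0 (|q.1| - r) < |q.2|} ∩
        {q : ℝ × ℝ | |q.2| < |q.1| + r})) := by
    ext q
    by_cases h : q.1 = 0 <;> simp [dunklBall, h, Set.mem_Ioo]
  rw [heq]
  have h0 : MeasurableSet {q : ℝ × ℝ | q.1 = 0} := measurable_fst (measurableSet_singleton 0)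
  refine (h0.inter (MeasurableSet.inter ?_ ?_)).union (h0.compl.inter (MeasurableSet.inter ?_ ?_))
  · exact measurableSet_lt measurable_const measurable_snd
  · exact measurableSet_lt measurable_snd measurable_const
  · exact measurableSet_lt (measurable_const.max (measurable_fst.abs.sub measurable_const))
      measurable_snd.abs
  · exact measurableSet_lt measurable_snd.abs (measurable_fst.abs.add measurable_const)

lemma ball_symm {x y : ℝ} (hx : x ≠ 0) (hy : y ≠ 0) :
    x ∈ dunklBall y r ↔ y ∈ dunklBall x r := by
  have hax : 0 < |x| := abs_pos.2 hx
  have hay : 0 < |y| := abs_pos.2 hy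
  simp only [dunklBall, if_neg hx, if_neg hy, mem_setOf_eq, max_lt_iff]
  constructor
  · rintro ⟨⟨-, h1⟩, h2⟩; exact ⟨⟨hay, by linarith⟩, by linarith⟩
  · rintro ⟨⟨-, h1⟩, h2⟩; exact ⟨⟨hax, by linarith⟩, by linarith⟩


lemma sect_ae_eq {x : ℝ} (hx : x ≠ 0) :
    {y : ℝ | x ∈ dunklBall y r} =ᵐ[dunklMeasure k] (dunklBall x r : Set ℝ) := by
  filter_upwards [ae_ne_zero (k := k)] with y hy
  exact eq_iff_iff.mpr (ball_symm hx hy)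

lemma measure_sect {x : ℝ} (hx : x ≠ 0) :
    dunklMeasure k {y : ℝ | x ∈ dunklBall y r} = dunklMeasure k (dunklBall x r) :=
  measure_congr (sect_ae_eq hx)

lemma lintegral_ball_swap {g : ℝ → ℝ≥0∞} (hg : Measurable g) :
    ∫⁻ y, ∫⁻ x, (dunklBall y r).indicator g x ∂(dunklMeasure k) ∂(dunklMeasure k)
      = ∫⁻ x, g x * dunklMeasure k (dunklBall x r) ∂(dunklMeasure k) := by
  classical
  set μ := dunklMeasure k with hμ
  set f : ℝ → ℝ → ℝ≥0∞ := fun y x => if x ∈ dunklBall y r then g x else 0 with hf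
  have hfm : Measurable (Function.uncurry f) := by
    have : Function.uncurry f = fun q : ℝ × ℝ => if q.2 ∈ dunklBall q.1 r then g q.2 else 0 := rfl
    rw [this]
    exact Measurable.ite prodBall_meas (hg.comp measurable_snd) measurable_const
  calc ∫⁻ y, ∫⁻ x, (dunklBall y r).indicator g x ∂μ ∂μ
      = ∫⁻ y, ∫⁻ x, f y x ∂μ ∂μ := by
        apply lintegral_congr fun y => lintegral_congr fun x => ?_
        simp [hf, Set.indicator_apply]
    _ = ∫⁻ x, ∫⁻ y, f y x ∂μ ∂μ := lintegral_lintegral_swap hfm.aemeasurable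
    _ = ∫⁻ x, g x * μ {y : ℝ | x ∈ dunklBall y r} ∂μ := by
        apply lintegral_congr fun x => ?_
        have hT : MeasurableSet {y : ℝ | x ∈ dunklBall y r} := by
          have : {y : ℝ | x ∈ dunklBall y r}
              = (fun y => (y, x)) ⁻¹' {q : ℝ × ℝ | q.2 ∈ dunklBall q.1 r} := rfl
          rw [this]
          exact (measurable_id.prodMk measurable_const) prodBall_meas
        calc ∫⁻ y, f y x ∂μ
            = ∫⁻ y, {y : ℝ | x ∈ dunklBall y r}.indicator (fun _ => g x) y ∂μ := by
              apply lintegral_congr fun y => ?_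
              simp [hf, Set.indicator_apply]
          _ = g x * μ {y : ℝ | x ∈ dunklBall y r} := lintegral_indicator_const hT _
    _ = ∫⁻ x, g x * μ (dunklBall x r) ∂μ := by
        apply lintegral_congr_ae
        filter_upwards [ae_ne_zero (k := k)] with x hx
        rw [hμ, measure_sect hx]

lemma Ioo_subset_ball (hr : 0 < r) (x : ℝ) :
    Ioo (max 0 (|x| - r)) (max 0 (|x| - r) + r) ⊆ dunklBall x r := by
  intro y hy
  obtain ⟨h1, h2⟩ := hy
  have hy0 : 0 < y := lt_of_le_of_lt (le_max_left _ _) h1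
  have hyabs : |y| = y := abs_of_pos hy0
  unfold dunklBall
  split_ifs with hx
  · subst hx
    have : max 0 (|(0:ℝ)| - r) = 0 := by
      rw [abs_zero, zero_sub]; exact max_eq_left (by linarith)
    rw [this] at h1 h2
    exact ⟨by linarith, by linarith⟩
  · have hmax : max 0 (|x| - r) ≤ |x| := max_le (abs_nonneg x) (by linarith)
    exact ⟨by rw [hyabs]; exact h1, by rw [hyabs]; linarith⟩

lemma measure_Ioo_mono (hk : -1/2 < k) {a : ℝ} (ha : 0 ≤ a) :
    dunklMeasure k (Ioo 0 r) ≤ dunklMeasure k (Ioo a (a + r)) := by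
  rw [dunklMeasure_def, withDensity_apply _ measurableSet_Ioo,
    withDensity_apply _ measurableSet_Ioo,
    ← lintegral_indicator measurableSet_Ioo, ← lintegral_indicator measurableSet_Ioo]
  have key : ∫⁻ x, (Ioo a (a+r)).indicator (dw k) x ∂volume
      = ∫⁻ x, (Ioo a (a+r)).indicator (dw k) (x + a) ∂volume :=
    ((measurePreserving_add_right volume a).lintegral_comp
      ((dw_measurable hk).indicator measurableSet_Ioo)).symm
  rw [key]
  apply lintegral_mono
  intro x
  show (Ioo 0 r).indicator (dw k) x ≤ (Ioo a (a+r)).indicator (dw k) (x + a)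
  by_cases hx : x ∈ Ioo 0 r
  · rw [Set.indicator_of_mem hx,
      Set.indicator_of_mem (show x + a ∈ Ioo a (a+r) from
        ⟨by linarith [hx.1], by linarith [hx.2]⟩)]
    unfold dw
    apply ENNReal.ofReal_le_ofReal
    apply mul_le_mul_of_nonneg_left _ (c_pos hk).le
    apply Real.rpow_le_rpow (abs_nonneg x) _ (by linarith : (0:ℝ) ≤ 2*k+1)
    rw [abs_of_pos hx.1, abs_of_pos (by linarith [hx.1] : 0 < x + a)]
    linarith
  · rw [Set.indicator_of_notMem hx]; exact zero_le

lemma m_le_ball (hk : -1/2 < k) (hr : 0 < r) (x : ℝ) :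
    dunklMeasure k (Ioo 0 r) ≤ dunklMeasure k (dunklBall x r) :=
  (measure_Ioo_mono hk (le_max_left _ _)).trans (measure_mono (Ioo_subset_ball hr x))

lemma m_pos (hk : -1/2 < k) (hr : 0 < r) : 0 < dunklMeasure k (Ioo 0 r) := by
  rw [dunklMeasure_def, withDensity_apply _ measurableSet_Ioo]
  set c := (2 ^ (k + 1) * Real.Gamma (k + 1))⁻¹ with hc
  have hlow : ENNReal.ofReal (c * (r/2) ^ (2*k+1)) * volume (Ioo (r/2) r)
      ≤ ∫⁻ x in Ioo 0 r, dw k x ∂volume := by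
    calc ENNReal.ofReal (c * (r/2) ^ (2*k+1)) * volume (Ioo (r/2) r)
        = ∫⁻ _ in Ioo (r/2) r, ENNReal.ofReal (c * (r/2) ^ (2*k+1)) ∂volume := by
          rw [setLIntegral_const]
      _ ≤ ∫⁻ x in Ioo (r/2) r, dw k x ∂volume := by
          apply setLIntegral_mono (dw_measurable hk)
          intro x hx
          unfold dw
          apply ENNReal.ofReal_le_ofReal
          apply mul_le_mul_of_nonneg_left _ (c_pos hk).le
          apply Real.rpow_le_rpow (by positivity) _ (by linarith : (0:ℝ) ≤ 2*k+1)
          rw [abs_of_pos (lt_trans (by positivity) hx.1)]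
          exact hx.1.le
      _ ≤ ∫⁻ x in Ioo 0 r, dw k x ∂volume := by
          apply lintegral_mono'
          · exact Measure.restrict_mono (Ioo_subset_Ioo (by positivity) le_rfl) le_rfl
          · exact le_rfl
  refine lt_of_lt_of_le ?_ hlow
  apply ENNReal.mul_pos
  · apply (ENNReal.ofReal_pos.2 _).ne'
    have := c_pos hk
    have : (0:ℝ) < (r/2) ^ (2*k+1) := Real.rpow_pos_of_pos (by positivity) _
    positivity
  · rw [Real.volume_Ioo]
    apply (ENNReal.ofReal_pos.2 (by linarith)).ne'

lemma m_ne_top (hk : -1/2 < k) (hr : 0 < r) : dunklMeasure k (Ioo 0 r) ≠ ⊤ := by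
  rw [dunklMeasure_def, withDensity_apply _ measurableSet_Ioo]
  set c := (2 ^ (k + 1) * Real.Gamma (k + 1))⁻¹ with hc
  have hup : ∫⁻ x in Ioo 0 r, dw k x ∂volume
      ≤ ENNReal.ofReal (c * r ^ (2*k+1)) * volume (Ioo 0 r) := by
    calc ∫⁻ x in Ioo 0 r, dw k x ∂volume
        ≤ ∫⁻ _ in Ioo 0 r, ENNReal.ofReal (c * r ^ (2*k+1)) ∂volume := by
          apply setLIntegral_mono measurable_const
          intro x hx
          unfold dw
          apply ENNReal.ofReal_le_ofReal
          apply mul_le_mul_of_nonneg_left _ (c_pos hk).le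
          apply Real.rpow_le_rpow (abs_nonneg x) _ (by linarith : (0:ℝ) ≤ 2*k+1)
          rw [abs_of_pos hx.1]; exact hx.2.le
      _ = ENNReal.ofReal (c * r ^ (2*k+1)) * volume (Ioo 0 r) := setLIntegral_const _ _
  apply ne_top_of_le_ne_top _ hup
  rw [Real.volume_Ioo]
  exact ENNReal.mul_ne_top ENNReal.ofReal_ne_top ENNReal.ofReal_ne_top


noncomputable def G (k r : ℝ) (f : ℝ → ℂ) : ℝ → ℝ≥0∞ :=
  fun y => eLpNorm ((dunklBall y r).indicator f) ⊤ (dunklMeasure k)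

lemma rNorm_eq (k r : ℝ) (p : ℝ≥0∞) (f : ℝ → ℂ) :
    rNorm k r p f = if p = ⊤ then essSup (G k r f) (dunklMeasure k)
      else (∫⁻ y, G k r f y ^ p.toReal ∂(dunklMeasure k)) ^ (1 / p.toReal) := rfl

lemma indicator_congr_ae {f g : ℝ → ℂ} {s : Set ℝ} (h : f =ᵐ[dunklMeasure k] g) :
    s.indicator f =ᵐ[dunklMeasure k] s.indicator g := by
  filter_upwards [h] with x hx
  by_cases hxs : x ∈ s <;> simp [Set.indicator_apply, hxs, hx]

lemma G_congr {f g : ℝ → ℂ} (h : f =ᵐ[dunklMeasure k] g) : G k r f = G k r g :=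
  funext fun y => eLpNorm_congr_ae (indicator_congr_ae h)

lemma rNorm_congr {p : ℝ≥0∞} {f g : ℝ → ℂ} (h : f =ᵐ[dunklMeasure k] g) :
    rNorm k r p f = rNorm k r p g := by
  rw [rNorm_eq, rNorm_eq, G_congr h]

lemma G_eq_essSup (f : ℝ → ℂ) (y : ℝ) :
    G k r f y = essSup ((dunklBall y r).indicator (fun x => (‖f x‖₊ : ℝ≥0∞)))
      (dunklMeasure k) := by
  rw [G, eLpNorm_exponent_top, eLpNormEssSup]
  congr 1
  funext x
  by_cases hx : x ∈ dunklBall y r <;> simp [Set.indicator_apply, hx] <;> rfl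

lemma meas_indicator_gt {h : ℝ → ℝ≥0∞} (t : ℝ≥0∞) (y : ℝ) :
    dunklMeasure k {x : ℝ | t < (dunklBall y r).indicator h x}
      = dunklMeasure k ({x : ℝ | t < h x} ∩ dunklBall y r) := by
  congr 1
  ext x
  by_cases hx : x ∈ dunklBall y r
  · simp [Set.indicator_of_mem hx, hx]
  · simp [Set.indicator_of_notMem hx, hx, (zero_le : 0 ≤ t).not_gt]

lemma measurable_G_aux {f : ℝ → ℂ} (hh : Measurable fun x => (‖f x‖₊ : ℝ≥0∞)) :
    Measurable (G k r f) := by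
  classical
  set μ := dunklMeasure k with hμ
  set h : ℝ → ℝ≥0∞ := fun x => (‖f x‖₊ : ℝ≥0∞) with hh_def
  set tq : ℚ → ℝ≥0∞ := fun q => ((Real.toNNReal q : ℝ≥0) : ℝ≥0∞) with htq
  set Φ : ℚ → ℝ → ℝ≥0∞ := fun q y => μ ({x : ℝ | tq q < h x} ∩ dunklBall y r) with hΦ
  have hΦmeas : ∀ q, Measurable (Φ q) := by
    intro q
    have hS : MeasurableSet {p : ℝ × ℝ | tq q < h p.2 ∧ p.2 ∈ dunklBall p.1 r} :=
      ((hh.comp measurable_snd) measurableSet_Ioi).inter prodBall_meas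
    have : Φ q = fun y =>
        μ (Prod.mk y ⁻¹' {p : ℝ × ℝ | tq q < h p.2 ∧ p.2 ∈ dunklBall p.1 r}) := rfl
    rw [this]
    exact measurable_measure_prodMk_left hS
  have key : ∀ y, G k r f y = ⨅ q : ℚ, (if Φ q y = 0 then tq q else ⊤) := by
    intro y
    rw [G_eq_essSup, essSup_eq_sInf]
    apply le_antisymm
    · apply le_iInf
      intro q
      split_ifs with hq
      · apply sInf_le
        rw [mem_setOf_eq, ← hμ, meas_indicator_gt]
        exact hq
      · exact le_top
    · apply le_sInf
      intro a ha
      refine le_of_forall_gt_imp_ge_of_dense fun b hb => ?_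
      obtain ⟨q, hq0, haq, hqb⟩ := ENNReal.lt_iff_exists_rat_btwn.mp hb
      have hΦq : Φ q y = 0 := by
        rw [hΦ]
        simp only
        rw [← meas_indicator_gt, ← hμ] at *
        apply measure_mono_null _ ha
        intro x hx
        rw [mem_setOf_eq] at hx ⊢
        exact haq.trans hx
      calc (⨅ q : ℚ, (if Φ q y = 0 then tq q else ⊤)) ≤ (if Φ q y = 0 then tq q else ⊤) :=
            iInf_le _ q
        _ = tq q := if_pos hΦq
        _ ≤ b := hqb.le
  have : G k r f = fun y => ⨅ q : ℚ, (if Φ q y = 0 then tq q else ⊤) := funext key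
  rw [this]
  apply Measurable.iInf
  intro q
  exact Measurable.ite ((hΦmeas q) (measurableSet_singleton 0)) measurable_const measurable_const

lemma measurable_G {f : ℝ → ℂ} (hf : AEStronglyMeasurable f (dunklMeasure k)) :
    Measurable (G k r f) := by
  rw [G_congr hf.ae_eq_mk]
  exact measurable_G_aux hf.stronglyMeasurable_mk.measurable.nnnorm.coe_nnreal_ennreal


lemma eLpNorm_top_le (hk : -1/2 < k) (hr : 0 < r) {p : ℝ≥0∞} (hp : 1 ≤ p)
    {f : ℝ → ℂ} (hf : AEStronglyMeasurable f (dunklMeasure k)) :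
    eLpNorm f ⊤ (dunklMeasure k)
      ≤ (dunklMeasure k (Ioo 0 r))⁻¹ ^ (1 / p.toReal) * rNorm k r p f := by
  classical
  rw [eLpNorm_congr_ae hf.ae_eq_mk, rNorm_congr hf.ae_eq_mk]
  set μ := dunklMeasure k with hμ
  set g : ℝ → ℂ := hf.mk f with hg_def
  have hgm : Measurable fun x => (‖g x‖₊ : ℝ≥0∞) :=
    hf.stronglyMeasurable_mk.measurable.nnnorm.coe_nnreal_ennreal
  set h : ℝ → ℝ≥0∞ := fun x => (‖g x‖₊ : ℝ≥0∞) with hh_def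
  set m : ℝ≥0∞ := μ (Ioo 0 r) with hm_def
  have hm0 : m ≠ 0 := (m_pos hk hr).ne'
  have hmtop : m ≠ ⊤ := m_ne_top hk hr
  by_contra hcon
  push_neg at hcon
  obtain ⟨t, ht1, ht2⟩ := exists_between hcon
  have hessSup : eLpNorm g ⊤ μ = essSup h μ := by rw [eLpNorm_exponent_top]; rfl
  have hA0 : 0 < μ {x | t < h x} := by
    rcases eq_or_ne (μ {x | t < h x}) 0 with h0 | h0
    · exfalso
      have hle : ∀ᵐ x ∂μ, h x ≤ t := by
        rw [ae_iff]; simpa [not_le] using h0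
      have hle2 : eLpNorm g ⊤ μ ≤ t := by
        rw [hessSup]; exact essSup_le_of_ae_le t hle
      exact absurd ht2 (not_lt.mpr hle2)
    · exact pos_iff_ne_zero.mpr h0
  obtain ⟨A, hA_meas, hA_sub, hA_pos, hA_fin⟩ :=
    Measure.exists_subset_measure_lt_top (hgm measurableSet_Ioi) hA0
  have hΦA : Measurable fun y => μ (A ∩ dunklBall y r) := by
    have hS : MeasurableSet {q : ℝ × ℝ | q.2 ∈ A ∧ q.2 ∈ dunklBall q.1 r} :=
      (measurable_snd hA_meas).inter prodBall_meas
    exact measurable_measure_prodMk_left hS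
  set Y : Set ℝ := {y | 0 < μ (A ∩ dunklBall y r)} with hY_def
  have hYmeas : MeasurableSet Y := hΦA measurableSet_Ioi
  have hfub : ∫⁻ y, μ (A ∩ dunklBall y r) ∂μ
      = ∫⁻ x, A.indicator (fun _ => (1:ℝ≥0∞)) x * μ (dunklBall x r) ∂μ := by
    rw [← lintegral_ball_swap (measurable_const.indicator hA_meas)]
    apply lintegral_congr fun y => ?_
    have hind : (dunklBall y r).indicator (A.indicator fun _ => (1:ℝ≥0∞))
        = (A ∩ dunklBall y r).indicator (fun _ => (1:ℝ≥0∞)) := by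
      funext x
      by_cases h1 : x ∈ A <;> by_cases h2 : x ∈ dunklBall y r <;>
        simp [Set.indicator_apply, h1, h2]
    rw [hind, lintegral_indicator_const (hA_meas.inter (measurableSet_ball _ _)), one_mul]
  have hlower : m * μ A ≤ ∫⁻ y, μ (A ∩ dunklBall y r) ∂μ := by
    rw [hfub]
    calc m * μ A = ∫⁻ x, A.indicator (fun _ => m) x ∂μ := by
          rw [lintegral_indicator_const hA_meas]
      _ ≤ ∫⁻ x, A.indicator (fun _ => (1:ℝ≥0∞)) x * μ (dunklBall x r) ∂μ := by
          apply lintegral_mono fun x => ?_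
          by_cases hx : x ∈ A
          · simp only [Set.indicator_of_mem hx, one_mul]
            exact m_le_ball hk hr x
          · simp [Set.indicator_of_notMem hx]
  have hupper : ∫⁻ y, μ (A ∩ dunklBall y r) ∂μ ≤ μ A * μ Y := by
    calc ∫⁻ y, μ (A ∩ dunklBall y r) ∂μ
        ≤ ∫⁻ y, Y.indicator (fun _ => μ A) y ∂μ := by
          apply lintegral_mono fun y => ?_
          by_cases hy : y ∈ Y
          · rw [Set.indicator_of_mem hy]
            exact measure_mono inter_subset_left
          · rw [Set.indicator_of_notMem hy]
            have hy' : ¬ 0 < μ (A ∩ dunklBall y r) := hy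
            exact not_lt.mp hy'
      _ = μ A * μ Y := lintegral_indicator_const hYmeas _
  have hYge : m ≤ μ Y := by
    have hcomb := hlower.trans hupper
    rw [mul_comm (μ A) (μ Y)] at hcomb
    exact (ENNReal.mul_le_mul_iff_left hA_pos.ne' hA_fin.ne).mp hcomb
  have hG_t : ∀ y ∈ Y, t ≤ G k r g y := by
    intro y hy
    by_contra hlt
    push_neg at hlt
    have hael := ENNReal.ae_le_essSup (μ := μ) ((dunklBall y r).indicator h)
    rw [← G_eq_essSup] at hael
    rw [ae_iff] at hael
    have hsub : A ∩ dunklBall y r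
        ⊆ {x | ¬ (dunklBall y r).indicator h x ≤ G k r g y} := by
      rintro x ⟨hxA, hxB⟩
      rw [mem_setOf_eq, not_le, Set.indicator_of_mem hxB]
      exact hlt.trans (hA_sub hxA)
    have hzero : μ (A ∩ dunklBall y r) = 0 := measure_mono_null hsub hael
    rw [hY_def, mem_setOf_eq, hzero] at hy
    exact lt_irrefl 0 hy
  have hfinal : t ≤ m⁻¹ ^ (1 / p.toReal) * rNorm k r p g := by
    rw [rNorm_eq]
    rcases eq_or_ne p ⊤ with hptop | hptop
    · subst hptop
      rw [if_pos rfl]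
      simp only [ENNReal.toReal_top, div_zero, ENNReal.rpow_zero, one_mul]
      by_contra hc
      push_neg at hc
      have hael := ENNReal.ae_le_essSup (μ := μ) (G k r g)
      rw [ae_iff] at hael
      have hsub : Y ⊆ {y | ¬ G k r g y ≤ essSup (G k r g) μ} := fun y hy => by
        rw [mem_setOf_eq, not_le]
        exact lt_of_lt_of_le hc (hG_t y hy)
      have hzero : μ Y = 0 := measure_mono_null hsub hael
      rw [hzero] at hYge
      exact hm0 (le_zero_iff.mp hYge)
    · rw [if_neg hptop]
      have hp0 : p ≠ 0 := (zero_lt_one.trans_le hp).ne'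
      have hpt : 0 < p.toReal := ENNReal.toReal_pos hp0 hptop
      have hint : t ^ p.toReal * m ≤ ∫⁻ y, G k r g y ^ p.toReal ∂μ := by
        calc t ^ p.toReal * m ≤ t ^ p.toReal * μ Y := mul_le_mul_right hYge _
          _ = ∫⁻ y, Y.indicator (fun _ => t ^ p.toReal) y ∂μ :=
              (lintegral_indicator_const hYmeas _).symm
          _ ≤ ∫⁻ y, G k r g y ^ p.toReal ∂μ := by
              apply lintegral_mono fun y => ?_
              by_cases hy : y ∈ Y
              · rw [Set.indicator_of_mem hy]
                exact ENNReal.rpow_le_rpow (hG_t y hy) hpt.le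
              · simp [Set.indicator_of_notMem hy]
      have hrpow := ENNReal.rpow_le_rpow hint (by positivity : (0:ℝ) ≤ 1 / p.toReal)
      rw [ENNReal.mul_rpow_of_nonneg _ _ (by positivity : (0:ℝ) ≤ 1 / p.toReal),
        ← ENNReal.rpow_mul, mul_one_div_cancel hpt.ne', ENNReal.rpow_one] at hrpow
      calc t = m⁻¹ ^ (1/p.toReal) * m ^ (1/p.toReal) * t := by
            rw [← ENNReal.mul_rpow_of_nonneg _ _ (by positivity : (0:ℝ) ≤ 1 / p.toReal),
              ENNReal.inv_mul_cancel hm0 hmtop, ENNReal.one_rpow, one_mul]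
        _ = m⁻¹ ^ (1/p.toReal) * (t * m ^ (1/p.toReal)) := by ring
        _ ≤ m⁻¹ ^ (1/p.toReal)
            * (∫⁻ y, G k r g y ^ p.toReal ∂μ) ^ (1/p.toReal) :=
            mul_le_mul_right hrpow _
  exact absurd hfinal (not_le.mpr ht1)


lemma rNorm_zero_of_ae_zero {p : ℝ≥0∞} (hp : 1 ≤ p) {f : ℝ → ℂ}
    (h : f =ᵐ[dunklMeasure k] 0) : rNorm k r p f = 0 := by
  rw [rNorm_congr h, rNorm_eq]
  have hG : G k r (0 : ℝ → ℂ) = fun _ => 0 := funext fun y => by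
    simp [G, Set.indicator_zero, eLpNorm_zero]
  rw [hG]
  split_ifs with hptop
  · refine le_antisymm ?_ zero_le
    exact essSup_le_of_ae_le 0 (Eventually.of_forall fun _ => le_rfl)
  · have hp0 : p ≠ 0 := (zero_lt_one.trans_le hp).ne'
    have hpt : 0 < p.toReal := ENNReal.toReal_pos hp0 hptop
    show (∫⁻ (_ : ℝ), (0:ℝ≥0∞) ^ p.toReal ∂(dunklMeasure k)) ^ (1 / p.toReal) = 0
    rw [ENNReal.zero_rpow_of_pos hpt, lintegral_zero,
      ENNReal.zero_rpow_of_pos (one_div_pos.mpr hpt)]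

lemma rNorm_smul {p : ℝ≥0∞} (hp : 1 ≤ p) (f : ℝ → ℂ) (c : ℂ) :
    rNorm k r p (c • f) = (‖c‖₊ : ℝ≥0∞) * rNorm k r p f := by
  have hG : G k r (c • f) = fun y => (‖c‖₊ : ℝ≥0∞) * G k r f y := funext fun y => by
    have hind : (dunklBall y r).indicator (c • f) = c • (dunklBall y r).indicator f := by
      funext x
      by_cases hx : x ∈ dunklBall y r <;> simp [Set.indicator_apply, hx]
    rw [G, hind, eLpNorm_const_smul]
    rfl
  rw [rNorm_eq, rNorm_eq, hG]
  split_ifs with hptop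
  · exact ENNReal.essSup_const_mul
  · have hp0 : p ≠ 0 := (zero_lt_one.trans_le hp).ne'
    have hpt : 0 < p.toReal := ENNReal.toReal_pos hp0 hptop
    simp_rw [ENNReal.mul_rpow_of_nonneg _ _ hpt.le]
    rw [lintegral_const_mul' _ _
      (ENNReal.rpow_ne_top_of_nonneg hpt.le ENNReal.coe_ne_top),
      ENNReal.mul_rpow_of_nonneg _ _ (by positivity : (0:ℝ) ≤ 1 / p.toReal),
      ← ENNReal.rpow_mul, mul_one_div_cancel hpt.ne', ENNReal.rpow_one]

lemma rNorm_add_le {p : ℝ≥0∞} (hp : 1 ≤ p) {f g : ℝ → ℂ}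
    (hf : AEStronglyMeasurable f (dunklMeasure k))
    (hg : AEStronglyMeasurable g (dunklMeasure k)) :
    rNorm k r p (f + g) ≤ rNorm k r p f + rNorm k r p g := by
  have hGle : ∀ y, G k r (f + g) y ≤ G k r f y + G k r g y := fun y => by
    have hind : (dunklBall y r).indicator (f + g)
        = (dunklBall y r).indicator f + (dunklBall y r).indicator g :=
      Set.indicator_add _ _ _
    rw [G, hind]
    exact eLpNorm_add_le (hf.indicator (measurableSet_ball y r))
      (hg.indicator (measurableSet_ball y r)) le_top
  rw [rNorm_eq, rNorm_eq, rNorm_eq]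
  split_ifs with hptop
  · calc essSup (G k r (f + g)) (dunklMeasure k)
        ≤ essSup (fun y => G k r f y + G k r g y) (dunklMeasure k) :=
          essSup_mono_ae (Eventually.of_forall hGle)
      _ ≤ essSup (G k r f) (dunklMeasure k) + essSup (G k r g) (dunklMeasure k) := by
          refine essSup_le_of_ae_le _ ?_
          filter_upwards [ENNReal.ae_le_essSup (μ := dunklMeasure k) (G k r f),
            ENNReal.ae_le_essSup (μ := dunklMeasure k) (G k r g)] with y h1 h2
          exact add_le_add h1 h2
  · have hp0 : p ≠ 0 := (zero_lt_one.trans_le hp).ne'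
    have hpt : 0 < p.toReal := ENNReal.toReal_pos hp0 hptop
    have hpt1 : 1 ≤ p.toReal := by
      rw [← ENNReal.toReal_one]
      exact ENNReal.toReal_mono hptop hp
    calc (∫⁻ y, G k r (f + g) y ^ p.toReal ∂(dunklMeasure k)) ^ (1 / p.toReal)
        ≤ (∫⁻ y, (G k r f + G k r g) y ^ p.toReal ∂(dunklMeasure k)) ^ (1 / p.toReal) := by
          apply ENNReal.rpow_le_rpow _ (by positivity)
          apply lintegral_mono fun y => ENNReal.rpow_le_rpow (hGle y) hpt.le
      _ ≤ (∫⁻ y, G k r f y ^ p.toReal ∂(dunklMeasure k)) ^ (1 / p.toReal)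
          + (∫⁻ y, G k r g y ^ p.toReal ∂(dunklMeasure k)) ^ (1 / p.toReal) :=
          ENNReal.lintegral_Lp_add_le (measurable_G hf).aemeasurable
            (measurable_G hg).aemeasurable hpt1

lemma rNorm_le_liminf {p : ℝ≥0∞} (hp : 1 ≤ p) {φ : ℕ → ℝ → ℂ} {ψ : ℝ → ℂ}
    (hφ : ∀ n, AEStronglyMeasurable (φ n) (dunklMeasure k))
    (hlim : ∀ᵐ x ∂(dunklMeasure k), Tendsto (fun n => φ n x) atTop (𝓝 (ψ x))) :
    rNorm k r p ψ ≤ atTop.liminf fun n => rNorm k r p (φ n) := by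
  have hGlim : ∀ y, G k r ψ y ≤ atTop.liminf fun n => G k r (φ n) y := fun y => by
    refine Lp.eLpNorm_lim_le_liminf_eLpNorm
      (fun n => (hφ n).indicator (measurableSet_ball y r)) _ ?_
    filter_upwards [hlim] with x hx
    by_cases hmem : x ∈ dunklBall y r
    · simpa [Set.indicator_of_mem hmem] using hx
    · simpa [Set.indicator_of_notMem hmem] using tendsto_const_nhds
  rw [rNorm_eq]
  simp_rw [rNorm_eq]
  split_ifs with hptop
  · calc essSup (G k r ψ) (dunklMeasure k)
        ≤ essSup (fun y => atTop.liminf fun n => G k r (φ n) y) (dunklMeasure k) :=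
          essSup_mono_ae (Eventually.of_forall hGlim)
      _ ≤ atTop.liminf fun n => essSup (G k r (φ n)) (dunklMeasure k) := by
          refine essSup_le_of_ae_le _ ?_
          have hae : ∀ᵐ y ∂(dunklMeasure k), ∀ n,
              G k r (φ n) y ≤ essSup (G k r (φ n)) (dunklMeasure k) :=
            ae_all_iff.mpr fun n => ENNReal.ae_le_essSup _
          filter_upwards [hae] with y hy
          exact liminf_le_liminf (Eventually.of_forall fun n => hy n)
  · have hp0 : p ≠ 0 := (zero_lt_one.trans_le hp).ne'
    have hpt : 0 < p.toReal := ENNReal.toReal_pos hp0 hptop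
    have hmono : Monotone (fun a : ℝ≥0∞ => a ^ p.toReal) :=
      fun a b hab => ENNReal.rpow_le_rpow hab hpt.le
    have hmono2 : Monotone (fun a : ℝ≥0∞ => a ^ (1 / p.toReal)) :=
      fun a b hab => ENNReal.rpow_le_rpow hab (by positivity)
    calc (∫⁻ y, G k r ψ y ^ p.toReal ∂(dunklMeasure k)) ^ (1 / p.toReal)
        ≤ (∫⁻ y, (atTop.liminf fun n => G k r (φ n) y) ^ p.toReal
            ∂(dunklMeasure k)) ^ (1 / p.toReal) := by
          apply ENNReal.rpow_le_rpow _ (by positivity)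
          exact lintegral_mono fun y => hmono (hGlim y)
      _ = (∫⁻ y, atTop.liminf (fun n => G k r (φ n) y ^ p.toReal)
            ∂(dunklMeasure k)) ^ (1 / p.toReal) := by
          congr 1
          apply lintegral_congr fun y => ?_
          exact hmono.map_liminf_of_continuousAt _
            (ENNReal.continuous_rpow_const.continuousAt)
      _ ≤ (atTop.liminf fun n => ∫⁻ y, G k r (φ n) y ^ p.toReal
            ∂(dunklMeasure k)) ^ (1 / p.toReal) := by
          apply ENNReal.rpow_le_rpow _ (by positivity)
          exact lintegral_liminf_le fun n =>
            (ENNReal.continuous_rpow_const.measurable).comp (measurable_G (hφ n))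
      _ = atTop.liminf fun n => (∫⁻ y, G k r (φ n) y ^ p.toReal
            ∂(dunklMeasure k)) ^ (1 / p.toReal) :=
          hmono2.map_liminf_of_continuousAt _
            (ENNReal.continuous_rpow_const.continuousAt)

end Stmt14Aux

end

open Filter Stmt14Aux

/-- `(L^∞, L^p)_r(μ)` with the norm `_r‖·‖_{∞,p}` is a complex Banach space: `_r‖·‖_{∞,p}`
satisfies the norm axioms (modulo `μ`-a.e. equality) and every Cauchy sequence converges. -/
theorem stmt14 (k : ℝ) (hk : -1/2 < k) (p : ℝ≥0∞) (hp : 1 ≤ p) (r : ℝ) (hr : 0 < r) :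
    (∀ f : ℝ → ℂ, AEStronglyMeasurable f (dunklMeasure k) →
      (rNorm k r p f = 0 ↔ f =ᵐ[dunklMeasure k] 0)) ∧
    (∀ (f : ℝ → ℂ) (c : ℂ), rNorm k r p (c • f) = (‖c‖₊ : ℝ≥0∞) * rNorm k r p f) ∧
    (∀ f g : ℝ → ℂ, AEStronglyMeasurable f (dunklMeasure k) →
      AEStronglyMeasurable g (dunklMeasure k) →
      rNorm k r p (f + g) ≤ rNorm k r p f + rNorm k r p g) ∧
    (∀ F : ℕ → ℝ → ℂ,
      (∀ n, AEStronglyMeasurable (F n) (dunklMeasure k)) →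
      (∀ n, rNorm k r p (F n) < ⊤) →
      (∀ ε : ℝ≥0∞, 0 < ε → ∃ N : ℕ, ∀ m n : ℕ, N ≤ m → N ≤ n →
        rNorm k r p (F m - F n) < ε) →
      ∃ f : ℝ → ℂ, AEStronglyMeasurable f (dunklMeasure k) ∧ rNorm k r p f < ⊤ ∧
        Filter.Tendsto (fun n => rNorm k r p (F n - f)) Filter.atTop (nhds 0)) := by
  refine ⟨?_, ?_, ?_, ?_⟩
  · intro f hf
    constructor
    · intro h0
      have hle := eLpNorm_top_le hk hr hp hf
      rw [h0, mul_zero] at hle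
      have hz : eLpNorm f ⊤ (dunklMeasure k) = 0 := le_zero_iff.mp hle
      exact (eLpNorm_eq_zero_iff hf (by simp)).mp hz
    · exact rNorm_zero_of_ae_zero hp
  · intro f c
    exact rNorm_smul hp f c
  · intro f g hf hg
    exact rNorm_add_le hp hf hg
  · intro F hmeas hfin hCauchy
    classical
    have hm0 : (dunklMeasure k (Ioo 0 r)) ≠ 0 := (m_pos hk hr).ne'
    have hmtop : dunklMeasure k (Ioo 0 r) ≠ ⊤ := m_ne_top hk hr
    set C : ℝ≥0∞ := (dunklMeasure k (Ioo 0 r))⁻¹ ^ (1 / p.toReal) with hC_def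
    have hC_ne_top : C ≠ ⊤ :=
      ENNReal.rpow_ne_top_of_nonneg (by positivity) (ENNReal.inv_ne_top.2 hm0)
    have hC_ne_zero : C ≠ 0 :=
      (ENNReal.rpow_pos (ENNReal.inv_pos.2 hmtop) (ENNReal.inv_ne_top.2 hm0)).ne'
    have hD : ∀ ε : ℝ≥0∞, 0 < ε → ∃ N, ∀ a b, N ≤ a → N ≤ b →
        eLpNorm (F a - F b) ⊤ (dunklMeasure k) < ε := by
      intro ε hε
      obtain ⟨N, hN⟩ := hCauchy (ε / C) (ENNReal.div_pos hε.ne' hC_ne_top)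
      refine ⟨N, fun a b ha hb => ?_⟩
      calc eLpNorm (F a - F b) ⊤ (dunklMeasure k)
          ≤ C * rNorm k r p (F a - F b) :=
            eLpNorm_top_le hk hr hp ((hmeas a).sub (hmeas b))
        _ < C * (ε / C) := (ENNReal.mul_lt_mul_iff_right hC_ne_zero hC_ne_top).2 (hN a b ha hb)
        _ ≤ ε := ENNReal.mul_div_le
    have haeC : ∀ᵐ x ∂(dunklMeasure k), ∀ a b : ℕ,
        (‖F a x - F b x‖₊ : ℝ≥0∞) ≤ eLpNorm (F a - F b) ⊤ (dunklMeasure k) := by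
      rw [ae_all_iff]
      intro a
      rw [ae_all_iff]
      intro b
      have hcn := enorm_ae_le_eLpNormEssSup (F a - F b) (dunklMeasure k)
      rw [← eLpNorm_exponent_top] at hcn
      exact hcn
    have hconv : ∀ᵐ x ∂(dunklMeasure k), ∃ L : ℂ,
        Tendsto (fun n => F n x) atTop (𝓝 L) := by
      filter_upwards [haeC] with x hx
      have hcauchy : CauchySeq fun n => F n x := by
        rw [EMetric.cauchySeq_iff]
        intro ε hε
        obtain ⟨N, hN⟩ := hD ε hε
        refine ⟨N, fun a ha b hb => ?_⟩
        calc edist (F a x) (F b x) = (‖F a x - F b x‖₊ : ℝ≥0∞) :=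
              edist_eq_enorm_sub _ _
          _ ≤ eLpNorm (F a - F b) ⊤ (dunklMeasure k) := hx a b
          _ < ε := hN a b ha hb
      exact cauchySeq_tendsto_of_complete hcauchy
    set f : ℝ → ℂ := fun x =>
      if h : ∃ L : ℂ, Tendsto (fun n => F n x) atTop (𝓝 L) then h.choose else 0 with hf_def
    have hftend : ∀ᵐ x ∂(dunklMeasure k), Tendsto (fun n => F n x) atTop (𝓝 (f x)) := by
      filter_upwards [hconv] with x hx
      have hfx : f x = hx.choose := by rw [hf_def]; exact dif_pos hx
      rw [hfx]
      exact hx.choose_spec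
    have hfmeas : AEStronglyMeasurable f (dunklMeasure k) :=
      aestronglyMeasurable_of_tendsto_ae atTop hmeas hftend
    have hkey : ∀ ε : ℝ≥0∞, 0 < ε → ∃ N, ∀ n, N ≤ n → rNorm k r p (F n - f) ≤ ε := by
      intro ε hε
      obtain ⟨N, hN⟩ := hCauchy ε hε
      refine ⟨N, fun n hn => ?_⟩
      have hlim : rNorm k r p (F n - f)
          ≤ atTop.liminf fun m => rNorm k r p (F n - F m) := by
        apply rNorm_le_liminf hp (fun m => (hmeas n).sub (hmeas m))
        filter_upwards [hftend] with x hx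
        exact tendsto_const_nhds.sub hx
      refine hlim.trans ?_
      apply liminf_le_of_frequently_le'
      exact (eventually_atTop.2 ⟨N, fun m hm => (hN n m hn hm).le⟩).frequently
    have hf1 : rNorm k r p f < ⊤ := by
      obtain ⟨N, hN⟩ := hkey 1 zero_lt_one
      have hFNf : rNorm k r p (f - F N) ≤ 1 := by
        have heq : f - F N = (-1 : ℂ) • (F N - f) := by
          funext x
          simp only [Pi.sub_apply, Pi.smul_apply, smul_eq_mul]
          ring
        rw [heq, rNorm_smul hp]
        simpa using hN N le_rfl
      calc rNorm k r p f = rNorm k r p ((f - F N) + F N) := by rw [sub_add_cancel]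
        _ ≤ rNorm k r p (f - F N) + rNorm k r p (F N) :=
            rNorm_add_le hp (hfmeas.sub (hmeas N)) (hmeas N)
        _ < ⊤ := ENNReal.add_lt_top.2
            ⟨lt_of_le_of_lt hFNf ENNReal.one_lt_top, hfin N⟩
    refine ⟨f, hfmeas, hf1, ?_⟩
    rw [ENNReal.tendsto_nhds_zero]
    intro ε hε
    obtain ⟨N, hN⟩ := hkey ε hε
    exact eventually_atTop.2 ⟨N, hN⟩
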